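/- If v is a simplicial vertex of a finite simple graph G (i.e., the induced subgraph on the neighborhood of v is a clique), then A(G) > A(G − v). -/

import Mathlib

open Finset

/-- A partition of the vertex set of `G` into independent (stable) sets. -/
def IsStablePartition {V : Type*} [Fintype V] [DecidableEq V] (G : SimpleGraph V)
    (P : Finpartition (Finset.univ : Finset V)) : Prop :=
  ∀ p ∈ P.parts, ∀ u ∈ p, ∀ v ∈ p, ¬ G.Adj u v

/-- `colS G k` : number of non-equivalent colorings of `G` with exactly `k` colors. -/
noncomputable def colS {V : Type*} [Fintype V] [DecidableEq V] (G : SimpleGraph V) (k : ℕ) : ℕ :=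
  Set.ncard {P : Finpartition (Finset.univ : Finset V) |
    IsStablePartition G P ∧ P.parts.card = k}

/-- `colB G` : total number of non-equivalent colorings of `G`. -/
noncomputable def colB {V : Type*} [Fintype V] [DecidableEq V] (G : SimpleGraph V) : ℕ :=
  ∑ k ∈ Finset.range (Fintype.card V + 1), colS G k

/-- `colT G` : total number of color classes over all non-equivalent colorings of `G`. -/
noncomputable def colT {V : Type*} [Fintype V] [DecidableEq V] (G : SimpleGraph V) : ℕ :=
  ∑ k ∈ Finset.range (Fintype.card V + 1), k * colS G k

/-- `colA G` : average number of colors in the non-equivalent colorings of `G`. -/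
noncomputable def colA {V : Type*} [Fintype V] [DecidableEq V] (G : SimpleGraph V) : ℚ :=
  (colT G : ℚ) / (colB G : ℚ)

/-- Disjoint union of two graphs. -/
def graphUnion {V W : Type*} (G : SimpleGraph V) (H : SimpleGraph W) : SimpleGraph (V ⊕ W) where
  Adj a b := match a, b with
    | Sum.inl x, Sum.inl y => G.Adj x y
    | Sum.inr x, Sum.inr y => H.Adj x y
    | _, _ => False
  symm := ⟨by rintro (x|x) (y|y) h <;> first | exact h.symm | exact h.elim⟩
  loopless := ⟨by rintro (x|x) h <;> first | exact G.loopless.irrefl x h | exact H.loopless.irrefl x h⟩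

/-- Join of two graphs: disjoint union plus all cross edges. -/
def graphJoin {V W : Type*} (G : SimpleGraph V) (H : SimpleGraph W) : SimpleGraph (V ⊕ W) where
  Adj a b := match a, b with
    | Sum.inl x, Sum.inl y => G.Adj x y
    | Sum.inr x, Sum.inr y => H.Adj x y
    | _, _ => True
  symm := ⟨by rintro (x|x) (y|y) h <;> first | exact h.symm | trivial⟩
  loopless := ⟨by rintro (x|x) h <;> first | exact G.loopless.irrefl x h | exact H.loopless.irrefl x h⟩

/-- Deletion of a vertex. -/
def deleteVertex {V : Type*} (G : SimpleGraph V) (v : V) : SimpleGraph {x : V // x ≠ v} :=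
  G.induce {x : V | x ≠ v}


set_option linter.unusedSectionVars false

section Aux
variable {V : Type*} [Fintype V] [DecidableEq V]

instance decStable (G : SimpleGraph V) [DecidableRel G.Adj] :
    DecidablePred (IsStablePartition G) := fun _ =>
  decidable_of_iff (∀ p ∈ _, ∀ u ∈ p, ∀ w ∈ p, ¬ G.Adj u w) Iff.rfl

instance decAdjDel (G : SimpleGraph V) [DecidableRel G.Adj] (v : V) :
    DecidableRel (deleteVertex G v).Adj := fun a b =>
  decidable_of_iff (G.Adj a.1 b.1) Iff.rfl

lemma adj_del {G : SimpleGraph V} {v : V} {a b : {x : V // x ≠ v}} :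
    (deleteVertex G v).Adj a b ↔ G.Adj a.1 b.1 := Iff.rfl

variable (v : V)

/-- Lift a finset of the subtype back to `V`. -/
def liftF (q : Finset {x : V // x ≠ v}) : Finset V := q.map (Function.Embedding.subtype _)

lemma mem_liftF {q : Finset {x : V // x ≠ v}} {a : V} :
    a ∈ liftF v q ↔ ∃ h : a ≠ v, (⟨a, h⟩ : {x : V // x ≠ v}) ∈ q := by
  simp only [liftF, mem_map, Function.Embedding.coe_subtype]
  constructor
  · rintro ⟨⟨x, hx⟩, hxq, rfl⟩; exact ⟨hx, hxq⟩
  · rintro ⟨h, hq⟩; exact ⟨⟨a, h⟩, hq, rfl⟩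

lemma not_mem_liftF (q : Finset {x : V // x ≠ v}) : v ∉ liftF v q := by
  rw [mem_liftF]; rintro ⟨h, -⟩; exact h rfl

lemma liftF_injective : Function.Injective (liftF v) := fun _ _ h =>
  Finset.map_injective _ h

lemma card_liftF (q : Finset {x : V // x ≠ v}) : (liftF v q).card = q.card :=
  Finset.card_map _

lemma subtype_liftF (q : Finset {x : V // x ≠ v}) :
    (liftF v q).subtype (· ≠ v) = q := by
  ext ⟨a, ha⟩
  simp [mem_liftF, ha]

lemma liftF_subtype (p : Finset V) :
    liftF v (p.subtype (· ≠ v)) = p.erase v := by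
  ext a
  simp only [mem_liftF, mem_subtype, mem_erase]
  constructor
  · rintro ⟨h, hq⟩; exact ⟨h, hq⟩
  · rintro ⟨h, hq⟩; exact ⟨h, hq⟩

lemma liftF_eq_empty {q : Finset {x : V // x ≠ v}} : liftF v q = ∅ ↔ q = ∅ := by
  simp [liftF]

lemma disjoint_liftF {q r : Finset {x : V // x ≠ v}} (h : Disjoint q r) :
    Disjoint (liftF v q) (liftF v r) := by
  rw [Finset.disjoint_left] at h ⊢
  intro a ha hb
  rw [mem_liftF] at ha hb
  obtain ⟨h1, ha⟩ := ha
  obtain ⟨h2, hb⟩ := hb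
  exact h ha hb

/-- Restriction of a partition of `V` to the subtype missing `v`. -/
def resP (P : Finpartition (univ : Finset V)) :
    Finpartition (univ : Finset {x : V // x ≠ v}) :=
  Finpartition.ofErase (P.parts.image (Finset.subtype (· ≠ v)))
    (by
      rw [Finset.supIndep_iff_pairwiseDisjoint]
      intro a ha b hb hab
      simp only [coe_image, Set.mem_image, mem_coe] at ha hb
      obtain ⟨p, hp, rfl⟩ := ha
      obtain ⟨q, hq, rfl⟩ := hb
      have hpq : p ≠ q := fun h => hab (by rw [h])
      have := P.disjoint hp hq hpq
      simp only [Function.onFun, id_eq] at this ⊢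
      rw [Finset.disjoint_left] at this ⊢
      intro x hx hy
      rw [Finset.mem_subtype] at hx hy
      exact this hx hy)
    (by
      apply Finset.eq_univ_of_forall
      intro x
      rw [Finset.sup_image]
      obtain ⟨p, hp, hx⟩ := P.exists_mem (mem_univ x.1)
      rw [Finset.mem_sup]
      exact ⟨p, hp, by simpa [Finset.mem_subtype] using hx⟩)

lemma mem_resP {P : Finpartition (univ : Finset V)} {q : Finset {x : V // x ≠ v}} :
    q ∈ (resP v P).parts ↔ q ≠ ∅ ∧ ∃ p ∈ P.parts, p.subtype (· ≠ v) = q := by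
  simp [resP, Finpartition.ofErase]

/-- Extension of a partition of `V \ {v}` by putting `v` into block `t` (new block if `t = ∅`). -/
def extP (Q : Finpartition (univ : Finset {x : V // x ≠ v})) (t : Finset {x : V // x ≠ v})
    (ht : t = ∅ ∨ t ∈ Q.parts) : Finpartition (univ : Finset V) where
  parts := insert (insert v (liftF v t)) ((Q.parts.erase t).image (liftF v))
  supIndep := by
    rw [Finset.supIndep_iff_pairwiseDisjoint]
    have base : (↑((Q.parts.erase t).image (liftF v)) : Set (Finset V)).PairwiseDisjoint id := by
      intro a ha b hb hne
      simp only [coe_image, Set.mem_image, mem_coe, mem_erase] at ha hb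
      obtain ⟨p, hp, rfl⟩ := ha
      obtain ⟨q, hq, rfl⟩ := hb
      simp only [Function.onFun, id_eq]
      exact disjoint_liftF v (Q.disjoint hp.2 hq.2 (fun h => hne (by rw [h])))
    rw [coe_insert]
    refine base.insert ?_
    intro b hb hne
    simp only [coe_image, Set.mem_image, mem_coe, mem_erase] at hb
    obtain ⟨q, hq, rfl⟩ := hb
    simp only [id_eq]
    rw [Finset.disjoint_insert_left]
    refine ⟨not_mem_liftF v q, ?_⟩
    rcases ht with rfl | ht
    · simp [liftF]
    · exact disjoint_liftF v (Q.disjoint ht hq.2 (Ne.symm hq.1))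
  sup_parts := by
    apply Finset.eq_univ_of_forall
    intro x
    rw [Finset.mem_sup]
    by_cases hx : x = v
    · exact ⟨insert v (liftF v t), mem_insert_self _ _, by simp [hx]⟩
    · obtain ⟨q, hq, hxq⟩ := Q.exists_mem (mem_univ (⟨x, hx⟩ : {x : V // x ≠ v}))
      by_cases hqt : q = t
      · refine ⟨insert v (liftF v t), mem_insert_self _ _, ?_⟩
        simp only [id_eq, Finset.mem_insert, mem_liftF]
        exact Or.inr ⟨hx, hqt ▸ hxq⟩
      · refine ⟨liftF v q, mem_insert_of_mem (mem_image_of_mem _ (mem_erase.2 ⟨hqt, hq⟩)), ?_⟩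
        simp only [id_eq, mem_liftF]
        exact ⟨hx, hxq⟩
  bot_notMem := by
    simp only [bot_eq_empty, mem_insert, mem_image, not_or]
    constructor
    · intro h
      exact (insert_nonempty _ _).ne_empty h.symm
    · rintro ⟨q, hq, hq0⟩
      rw [liftF_eq_empty] at hq0
      exact Q.bot_notMem (by rw [bot_eq_empty, ← hq0]; exact (mem_erase.1 hq).2)

lemma extP_parts_card (Q : Finpartition (univ : Finset {x : V // x ≠ v}))
    (t : Finset {x : V // x ≠ v}) (ht : t = ∅ ∨ t ∈ Q.parts) :
    (extP v Q t ht).parts.card = (Q.parts.erase t).card + 1 := by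
  have hnm : insert v (liftF v t) ∉ (Q.parts.erase t).image (liftF v) := by
    intro h
    obtain ⟨q, _, hq⟩ := mem_image.1 h
    exact not_mem_liftF v q (hq ▸ mem_insert_self v _)
  have hparts : (extP v Q t ht).parts
      = insert (insert v (liftF v t)) ((Q.parts.erase t).image (liftF v)) := rfl
  rw [hparts, card_insert_of_notMem hnm,
    Finset.card_image_of_injective _ (liftF_injective v)]

lemma extP_parts (Q : Finpartition (univ : Finset {x : V // x ≠ v}))
    (t : Finset {x : V // x ≠ v}) (ht : t = ∅ ∨ t ∈ Q.parts) :
    (extP v Q t ht).parts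
      = insert (insert v (liftF v t)) ((Q.parts.erase t).image (liftF v)) := rfl

lemma subtype_insert_self (s : Finset V) :
    (insert v s).subtype (· ≠ v) = s.subtype (· ≠ v) := by
  ext ⟨a, ha⟩
  simp [ha]

variable (G : SimpleGraph V) [DecidableRel G.Adj]

lemma extP_stable {Q : Finpartition (univ : Finset {x : V // x ≠ v})}
    {t : Finset {x : V // x ≠ v}} {ht : t = ∅ ∨ t ∈ Q.parts}
    (hQ : IsStablePartition (deleteVertex G v) Q) (htN : ∀ x ∈ t, ¬ G.Adj v x.1) :
    IsStablePartition G (extP v Q t ht) := by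
  intro p hp u hu w hw hadj
  rw [extP_parts, mem_insert] at hp
  rcases hp with rfl | hp
  · rw [mem_insert] at hu hw
    have htp : ∀ x ∈ t, ∀ y ∈ t, ¬ G.Adj x.1 y.1 := by
      rcases ht with rfl | ht
      · simp
      · intro x hx y hy
        exact hQ t ht x hx y hy
    rcases hu with hu0 | hu <;> rcases hw with hw0 | hw
    · rw [hu0, hw0] at hadj
      exact G.irrefl hadj
    · rw [hu0] at hadj
      obtain ⟨hw', hwt⟩ := (mem_liftF v).1 hw
      exact htN _ hwt hadj
    · rw [hw0] at hadj
      obtain ⟨hu', hut⟩ := (mem_liftF v).1 hu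
      exact htN _ hut hadj.symm
    · obtain ⟨hu', hut⟩ := (mem_liftF v).1 hu
      obtain ⟨hw', hwt⟩ := (mem_liftF v).1 hw
      exact htp _ hut _ hwt hadj
  · obtain ⟨q, hq, rfl⟩ := mem_image.1 hp
    obtain ⟨hu', hut⟩ := (mem_liftF v).1 hu
    obtain ⟨hw', hwt⟩ := (mem_liftF v).1 hw
    exact hQ q (mem_erase.1 hq).2 _ hut _ hwt hadj

lemma resP_stable {P : Finpartition (univ : Finset V)} (hP : IsStablePartition G P) :
    IsStablePartition (deleteVertex G v) (resP v P) := by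
  intro q hq u hu w hw hadj
  obtain ⟨-, p, hp, rfl⟩ := (mem_resP v).1 hq
  rw [Finset.mem_subtype] at hu hw
  exact hP p hp u.1 hu w.1 hw (adj_del.1 hadj)

lemma resP_extP (Q : Finpartition (univ : Finset {x : V // x ≠ v}))
    (t : Finset {x : V // x ≠ v}) (ht : t = ∅ ∨ t ∈ Q.parts) :
    resP v (extP v Q t ht) = Q := by
  apply Finpartition.ext
  have h1 : (resP v (extP v Q t ht)).parts
      = (((extP v Q t ht).parts).image (Finset.subtype (· ≠ v))).erase ∅ := rfl
  rw [h1, extP_parts, image_insert, Finset.image_image,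
    subtype_insert_self, subtype_liftF]
  have h2 : ((Q.parts.erase t).image (Finset.subtype (· ≠ v) ∘ liftF v))
      = Q.parts.erase t :=
    (Finset.image_congr (fun q _ => subtype_liftF v q)).trans Finset.image_id
  rw [h2]
  have h0 : (∅ : Finset {x : V // x ≠ v}) ∉ Q.parts := by
    simpa using Q.not_bot_mem
  rcases ht with rfl | ht
  · rw [Finset.erase_eq_of_notMem h0, Finset.erase_insert h0]
  · rw [Finset.insert_erase ht, Finset.erase_eq_of_notMem h0]


lemma part_v_extP (Q : Finpartition (univ : Finset {x : V // x ≠ v}))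
    (t : Finset {x : V // x ≠ v}) (ht : t = ∅ ∨ t ∈ Q.parts) :
    (extP v Q t ht).part v = insert v (liftF v t) :=
  Finpartition.part_eq_of_mem _ (by rw [extP_parts]; exact mem_insert_self _ _)
    (mem_insert_self _ _)

lemma extP_inj {Q : Finpartition (univ : Finset {x : V // x ≠ v})}
    {t t' : Finset {x : V // x ≠ v}} {ht : t = ∅ ∨ t ∈ Q.parts}
    {ht' : t' = ∅ ∨ t' ∈ Q.parts} (h : extP v Q t ht = extP v Q t' ht') : t = t' := by
  have h2 : insert v (liftF v t) = insert v (liftF v t') := by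
    rw [← part_v_extP v Q t ht, ← part_v_extP v Q t' ht', h]
  apply liftF_injective v
  rw [← Finset.erase_insert (not_mem_liftF v t), ← Finset.erase_insert (not_mem_liftF v t'), h2]

lemma exists_extP (P : Finpartition (univ : Finset V)) (hP : IsStablePartition G P) :
    ∃ (t : Finset {x : V // x ≠ v}) (ht : t = ∅ ∨ t ∈ (resP v P).parts),
      (∀ x ∈ t, ¬ G.Adj v x.1) ∧ extP v (resP v P) t ht = P := by
  set p := P.part v with hpdef
  have hpv : v ∈ p := P.mem_part (mem_univ v)
  have hpm : p ∈ P.parts := P.part_mem.2 (mem_univ v)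
  set t : Finset {x : V // x ≠ v} := p.subtype (· ≠ v) with htdef
  have hlift : liftF v t = p.erase v := liftF_subtype v p
  have ht : t = ∅ ∨ t ∈ (resP v P).parts := by
    by_cases h0 : t = ∅
    · exact Or.inl h0
    · exact Or.inr ((mem_resP v).2 ⟨h0, p, hpm, rfl⟩)
  refine ⟨t, ht, ?_, ?_⟩
  · intro x hx
    rw [htdef, Finset.mem_subtype] at hx
    exact hP p hpm v hpv x.1 hx
  · apply Finpartition.ext
    rw [extP_parts, hlift, Finset.insert_erase hpv]
    have himg : ((resP v P).parts.erase t).image (liftF v) = P.parts.erase p := by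
      ext r
      simp only [mem_image, mem_erase]
      constructor
      · rintro ⟨q, ⟨hqt, hq⟩, rfl⟩
        obtain ⟨hq0, p', hp', rfl⟩ := (mem_resP v).1 hq
        have hne : p' ≠ p := by
          rintro rfl
          exact hqt rfl
        have hvp' : v ∉ p' := fun hv' =>
          Finset.disjoint_left.1 (P.disjoint hp' hpm hne) hv' hpv
        rw [liftF_subtype, Finset.erase_eq_of_notMem hvp']
        exact ⟨hne, hp'⟩
      · rintro ⟨hne, hr⟩
        have hvr : v ∉ r := fun hv' =>
          Finset.disjoint_left.1 (P.disjoint hr hpm hne) hv' hpv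
        refine ⟨r.subtype (· ≠ v), ⟨?_, ?_⟩, ?_⟩
        · -- r.subtype ≠ t
          intro hrt
          have : r.erase v = p.erase v := by
            rw [← liftF_subtype v r, ← liftF_subtype v p, hrt]
          rw [Finset.erase_eq_of_notMem hvr] at this
          obtain ⟨x, hx⟩ := P.nonempty_of_mem_parts hr
          have hxp : x ∈ p := Finset.mem_of_mem_erase (this ▸ hx)
          exact Finset.disjoint_left.1 (P.disjoint hr hpm hne) hx hxp
        · refine (mem_resP v).2 ⟨?_, r, hr, rfl⟩
          obtain ⟨x, hx⟩ := P.nonempty_of_mem_parts hr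
          have hxv : x ≠ v := fun h => hvr (h ▸ hx)
          intro hemp
          have : (⟨x, hxv⟩ : {x : V // x ≠ v}) ∈ r.subtype (· ≠ v) :=
            Finset.mem_subtype.2 hx
          rw [hemp] at this
          exact absurd this (Finset.notMem_empty _)
        · rw [liftF_subtype, Finset.erase_eq_of_notMem hvr]
    rw [himg, Finset.insert_erase hpm]

/-- The blocks available for `v` (including the empty block = new block). -/
def tchoices (Q : Finpartition (univ : Finset {x : V // x ≠ v})) :
    Finset (Finset {x : V // x ≠ v}) :=
  insert ∅ (Q.parts.filter (fun q => ∀ x ∈ q, ¬ G.Adj v x.1))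

lemma mem_tchoices_cases {Q : Finpartition (univ : Finset {x : V // x ≠ v})}
    {t : Finset {x : V // x ≠ v}} (h : t ∈ tchoices v G Q) : t = ∅ ∨ t ∈ Q.parts := by
  rcases mem_insert.1 h with h | h
  · exact Or.inl h
  · exact Or.inr (mem_filter.1 h).1

lemma mem_tchoices_avoid {Q : Finpartition (univ : Finset {x : V // x ≠ v})}
    {t : Finset {x : V // x ≠ v}} (h : t ∈ tchoices v G Q) : ∀ x ∈ t, ¬ G.Adj v x.1 := by
  rcases mem_insert.1 h with h | h
  · subst h; simp
  · exact (mem_filter.1 h).2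

lemma empty_not_mem_good (Q : Finpartition (univ : Finset {x : V // x ≠ v})) :
    (∅ : Finset {x : V // x ≠ v}) ∉ Q.parts.filter (fun q => ∀ x ∈ q, ¬ G.Adj v x.1) := by
  intro h
  exact absurd ((mem_filter.1 h).1) (by simpa using Q.not_bot_mem)

lemma tchoices_card (Q : Finpartition (univ : Finset {x : V // x ≠ v})) :
    (tchoices v G Q).card
      = (Q.parts.filter (fun q => ∀ x ∈ q, ¬ G.Adj v x.1)).card + 1 := by
  rw [tchoices, card_insert_of_notMem (empty_not_mem_good v G Q)]

set_option maxHeartbeats 1000000 in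
lemma good_card_add (hv : ∀ a ∈ G.neighborSet v, ∀ b ∈ G.neighborSet v, a ≠ b → G.Adj a b)
    {Q : Finpartition (univ : Finset {x : V // x ≠ v})}
    (hQ : IsStablePartition (deleteVertex G v) Q) :
    (Q.parts.filter (fun q => ∀ x ∈ q, ¬ G.Adj v x.1)).card
        + (univ.filter (fun x : V => G.Adj v x)).card = Q.parts.card := by
  set NF : Finset V := univ.filter (fun x : V => G.Adj v x) with hNF
  set N' : Finset {x : V // x ≠ v} := NF.subtype (· ≠ v) with hN'
  have hvNF : v ∉ NF := by simp [hNF]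
  have hcard : N'.card = NF.card := by
    rw [← card_liftF v N', hN', liftF_subtype, Finset.erase_eq_of_notMem hvNF]
  have hbad : N'.card = (Q.parts.filter (fun q => ¬ ∀ x ∈ q, ¬ G.Adj v x.1)).card := by
    apply Finset.card_bij (fun a _ => Q.part a)
    · intro a ha
      have haN : G.Adj v a.1 := by
        have := Finset.mem_subtype.1 ha
        rw [hNF, mem_filter] at this
        exact this.2
      refine mem_filter.2 ⟨Q.part_mem.2 (mem_univ a), ?_⟩
      push_neg
      exact ⟨a, Q.mem_part (mem_univ a), haN⟩
    · intro a ha b hb hab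
      by_contra hne
      have haN : G.Adj v a.1 := by
        have := Finset.mem_subtype.1 ha
        rw [hNF, mem_filter] at this
        exact this.2
      have hbN : G.Adj v b.1 := by
        have := Finset.mem_subtype.1 hb
        rw [hNF, mem_filter] at this
        exact this.2
      have hadj : G.Adj a.1 b.1 := hv a.1 haN b.1 hbN (fun h => hne (Subtype.ext h))
      have hbmem : b ∈ Q.part a := by
        rw [hab]
        exact Q.mem_part (mem_univ b)
      exact hQ (Q.part a) (Q.part_mem.2 (mem_univ a)) a (Q.mem_part (mem_univ a))
        b hbmem hadj
    · intro q hq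
      obtain ⟨hqm, hqb⟩ := mem_filter.1 hq
      push_neg at hqb
      obtain ⟨x, hxq, hxN⟩ := hqb
      refine ⟨x, ?_, Q.part_eq_of_mem hqm hxq⟩
      rw [hN', Finset.mem_subtype, hNF, mem_filter]
      exact ⟨mem_univ _, hxN⟩
  have hsplit := Finset.card_filter_add_card_filter_not
    (s := Q.parts) (p := fun q => ∀ x ∈ q, ¬ G.Adj v x.1)
  beta_reduce at hsplit
  omega

lemma fiber_eq {Q : Finpartition (univ : Finset {x : V // x ≠ v})}
    (hQ : IsStablePartition (deleteVertex G v) Q) :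
    ((univ.filter (IsStablePartition G)).filter (fun P => resP v P = Q))
      = (tchoices v G Q).attach.image
          (fun t => extP v Q t.1 (mem_tchoices_cases v G t.2)) := by
  ext P
  simp only [mem_filter, mem_univ, true_and, mem_image, mem_attach, true_and]
  constructor
  · rintro ⟨hP, hres⟩
    subst hres
    obtain ⟨t, ht, htN, hext⟩ := exists_extP v G P hP
    have htm : t ∈ tchoices v G (resP v P) := by
      rcases ht with rfl | ht'
      · exact mem_insert_self _ _
      · exact mem_insert_of_mem (mem_filter.2 ⟨ht', htN⟩)
    exact ⟨⟨t, htm⟩, hext⟩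
  · rintro ⟨⟨t, htm⟩, rfl⟩
    exact ⟨extP_stable v G hQ (mem_tchoices_avoid v G htm), resP_extP v Q t _⟩

lemma fiber_injOn (Q : Finpartition (univ : Finset {x : V // x ≠ v})) :
    Set.InjOn (fun t : {x // x ∈ tchoices v G Q} => extP v Q t.1 (mem_tchoices_cases v G t.2))
      ↑(tchoices v G Q).attach := by
  intro a _ b _ h
  exact Subtype.ext (extP_inj v h)

lemma fiber_card {Q : Finpartition (univ : Finset {x : V // x ≠ v})}
    (hQ : IsStablePartition (deleteVertex G v) Q) :
    ((univ.filter (IsStablePartition G)).filter (fun P => resP v P = Q)).card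
      = (Q.parts.filter (fun q => ∀ x ∈ q, ¬ G.Adj v x.1)).card + 1 := by
  rw [fiber_eq v G hQ, Finset.card_image_of_injOn (fiber_injOn v G Q), Finset.card_attach,
    tchoices_card]

lemma fiber_sum {Q : Finpartition (univ : Finset {x : V // x ≠ v})}
    (hQ : IsStablePartition (deleteVertex G v) Q) :
    (∑ P ∈ (univ.filter (IsStablePartition G)).filter (fun P => resP v P = Q),
        P.parts.card)
      = (Q.parts.card + 1)
        + (Q.parts.filter (fun q => ∀ x ∈ q, ¬ G.Adj v x.1)).card * Q.parts.card := by
  rw [fiber_eq v G hQ, Finset.sum_image (fiber_injOn v G Q)]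
  have hcongr : ∀ t ∈ (tchoices v G Q).attach,
      (extP v Q t.1 (mem_tchoices_cases v G t.2)).parts.card
        = (Q.parts.erase t.1).card + 1 := fun t _ => extP_parts_card v Q t.1 _
  rw [Finset.sum_congr rfl hcongr, Finset.sum_attach _ (fun t => (Q.parts.erase t).card + 1),
    tchoices, Finset.sum_insert (empty_not_mem_good v G Q)]
  have h0 : (∅ : Finset {x : V // x ≠ v}) ∉ Q.parts := by simpa using Q.not_bot_mem
  rw [Finset.erase_eq_of_notMem h0]
  congr 1
  rw [Finset.sum_congr rfl (fun t ht => ?_), Finset.sum_const, smul_eq_mul]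
  have htm : t ∈ Q.parts := (mem_filter.1 ht).1
  rw [Finset.card_erase_of_mem htm]
  have : 0 < Q.parts.card := Finset.card_pos.2 ⟨t, htm⟩
  omega

end Aux

section Count
variable {U : Type*} [Fintype U] [DecidableEq U] (H : SimpleGraph U) [DecidableRel H.Adj]

lemma colS_eq (k : ℕ) :
    colS H k = ((univ.filter (IsStablePartition H)).filter
      (fun P => P.parts.card = k)).card := by
  rw [colS, Finset.filter_filter]
  rw [← Set.ncard_coe_finset]
  congr 1
  ext P
  simp

lemma bot_stable : IsStablePartition H ⊥ := by
  intro p hp u hu w hw hadj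
  rw [Finpartition.mem_bot_iff] at hp
  obtain ⟨a, -, rfl⟩ := hp
  rw [mem_singleton] at hu hw
  exact H.irrefl (hu ▸ hw ▸ hadj)

lemma maps_to_range (P : Finpartition (univ : Finset U)) :
    P.parts.card ∈ Finset.range (Fintype.card U + 1) := by
  rw [Finset.mem_range, Nat.lt_succ_iff, ← Finset.card_univ]
  exact P.card_parts_le_card

lemma colB_eq :
    colB H = (univ.filter (IsStablePartition H)).card := by
  rw [colB, Finset.card_eq_sum_card_fiberwise
    (f := fun P : Finpartition (univ : Finset U) => P.parts.card)
    (t := Finset.range (Fintype.card U + 1)) (fun P _ => maps_to_range P)]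
  exact Finset.sum_congr rfl (fun k _ => colS_eq H k)

lemma colT_eq :
    colT H = ∑ P ∈ univ.filter (IsStablePartition H), P.parts.card := by
  rw [colT, ← Finset.sum_fiberwise_of_maps_to
    (g := fun P : Finpartition (univ : Finset U) => P.parts.card)
    (fun P _ => maps_to_range P)]
  refine Finset.sum_congr rfl (fun k _ => ?_)
  rw [colS_eq]
  rw [Finset.sum_congr rfl (fun P hP => (mem_filter.1 hP).2), Finset.sum_const, smul_eq_mul,
    mul_comm]

end Count

theorem stmt6 {V : Type*} [Fintype V] [DecidableEq V] (G : SimpleGraph V) (v : V)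
    (hv : ∀ a ∈ G.neighborSet v, ∀ b ∈ G.neighborSet v, a ≠ b → G.Adj a b) :
    colA G > colA (deleteVertex G v) := by
  show (colT (deleteVertex G v) : ℚ) / (colB (deleteVertex G v) : ℚ)
      < (colT G : ℚ) / (colB G : ℚ)
  classical
  letI : DecidableRel G.Adj := Classical.decRel _
  set H := deleteVertex G v with hH
  set S' : Finset (Finpartition (univ : Finset {x : V // x ≠ v})) :=
    univ.filter (IsStablePartition H) with hS'def
  have hSmem : ∀ Q ∈ S', IsStablePartition H Q := fun Q hQ => (mem_filter.1 hQ).2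
  set d : ℕ := (univ.filter (fun x : V => G.Adj v x)).card with hd
  set gc : Finpartition (univ : Finset {x : V // x ≠ v}) → ℕ :=
    fun Q => (Q.parts.filter (fun q => ∀ x ∈ q, ¬ G.Adj v x.1)).card with hgc
  -- ℕ-level identities
  have hmaps : ∀ P ∈ univ.filter (IsStablePartition G), resP v P ∈ S' :=
    fun P hP => mem_filter.2 ⟨mem_univ _, resP_stable v G (mem_filter.1 hP).2⟩
  have hBG : colB G = ∑ Q ∈ S', (gc Q + 1) := by
    rw [colB_eq G, Finset.card_eq_sum_card_fiberwise hmaps]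
    exact Finset.sum_congr rfl (fun Q hQ => fiber_card v G (hSmem Q hQ))
  have hTG : colT G = ∑ Q ∈ S', ((Q.parts.card + 1) + gc Q * Q.parts.card) := by
    rw [colT_eq G, ← Finset.sum_fiberwise_of_maps_to hmaps]
    exact Finset.sum_congr rfl (fun Q hQ => fiber_sum v G (hSmem Q hQ))
  have hBH : colB H = S'.card := colB_eq H
  have hTH : colT H = ∑ Q ∈ S', Q.parts.card := colT_eq H
  have hgd : ∀ Q ∈ S', gc Q + d = Q.parts.card :=
    fun Q hQ => good_card_add v G hv (hSmem Q hQ)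
  have hBHpos : 0 < S'.card :=
    Finset.card_pos.2 ⟨⊥, mem_filter.2 ⟨mem_univ _, bot_stable H⟩⟩
  have hBGpos : 0 < ∑ Q ∈ S', (gc Q + 1) :=
    Finset.sum_pos (fun Q _ => Nat.succ_pos _) ⟨⊥, mem_filter.2 ⟨mem_univ _, bot_stable H⟩⟩
  -- ℚ-level
  set n : ℚ := (S'.card : ℚ) with hn
  set A1 : ℚ := ∑ Q ∈ S', (Q.parts.card : ℚ) with hA1
  set A2 : ℚ := ∑ Q ∈ S', (Q.parts.card : ℚ) ^ 2 with hA2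
  have hgcQ : ∀ Q ∈ S', (gc Q : ℚ) = (Q.parts.card : ℚ) - d := by
    intro Q hQ
    have := hgd Q hQ
    have h2 : (gc Q : ℚ) + d = (Q.parts.card : ℚ) := by exact_mod_cast congrArg (Nat.cast : ℕ → ℚ) this
    linarith
  have hQB : ((∑ Q ∈ S', (gc Q + 1) : ℕ) : ℚ) = A1 - d * n + n := by
    push_cast
    rw [Finset.sum_add_distrib, Finset.sum_congr rfl hgcQ, Finset.sum_sub_distrib]
    simp only [Finset.sum_const, nsmul_eq_mul, mul_one]
    rw [hA1]
    push_cast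
    ring
  have hQT : ((∑ Q ∈ S', ((Q.parts.card + 1) + gc Q * Q.parts.card) : ℕ) : ℚ)
      = A2 - d * A1 + A1 + n := by
    push_cast
    have : ∀ Q ∈ S', ((Q.parts.card : ℚ) + 1 + (gc Q : ℚ) * Q.parts.card)
        = (Q.parts.card : ℚ)^2 - d * Q.parts.card + ((Q.parts.card : ℚ) + 1) := by
      intro Q hQ
      rw [hgcQ Q hQ]
      ring
    rw [Finset.sum_congr rfl this, Finset.sum_add_distrib, Finset.sum_sub_distrib,
      Finset.sum_add_distrib, ← Finset.mul_sum]
    simp only [Finset.sum_const, nsmul_eq_mul, mul_one]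
    rw [hA1, hA2]
    push_cast
    ring
  have hCS : A1 ^ 2 ≤ n * A2 := by
    rw [hA1, hA2, hn]
    exact sq_sum_le_card_mul_sum_sq
  have hn1 : 1 ≤ n := by
    rw [hn]
    exact_mod_cast hBHpos
  rw [hTH, hBH, hTG, hBG, div_lt_div_iff₀ (by exact_mod_cast hBHpos)
    (by exact_mod_cast hBGpos), hQT, hQB]
  have h1 : (A2 - d * A1 + A1 + n) * n - A1 * (A1 - d * n + n)
      = n * A2 - A1 ^ 2 + n ^ 2 := by ring
  have h2 : (1:ℚ) ≤ n ^ 2 := by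
    rw [sq]
    exact le_trans hn1 (le_mul_of_one_le_left (le_trans zero_le_one hn1) hn1)
  push_cast
  rw [← hA1, ← hn]
  linarith [hCS, h1, h2]
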